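/- Let B be a finite dimensional algebra and 0 → L → X ⊕ Y → M → 0 an almost split sequence in mod B with maps (f', g')^t : L → X ⊕ Y and (f, g) : X ⊕ Y → M. If f' is a monomorphism then g is a monomorphism; if f' is an epimorphism then g is an epimorphism. Symmetrically, if g' is a monomorphism (resp. epimorphism) then f is a monomorphism (resp. epimorphism). -/
import Mathlib


open CategoryTheory CategoryTheory.Limits

noncomputable section

/-- `Hom_A(M,N) = 0`. -/
def HomZero (R : Type) [Ring R] (M N : ModuleCat R) : Prop := ∀ f : M ⟶ N, f = 0

/-- `Ext¹_A(M,N) = 0`, expressed by: every short exact sequence `0 → N → E → M → 0`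
in `mod A` splits. -/
def Ext1Zero (R : Type) [Ring R] (M N : ModuleCat R) : Prop :=
  ∀ (S : CategoryTheory.ShortComplex (ModuleCat R)), S.ShortExact →
    (S.X₁ ≅ N) → (S.X₃ ≅ M) → Nonempty S.Splitting

/-- An indecomposable module: nonzero, and any direct sum decomposition is trivial. -/
def Indec (R : Type) [Ring R] (M : ModuleCat R) : Prop :=
  ¬ IsZero M ∧ ∀ N P : ModuleCat R, Nonempty (M ≅ N ⊞ P) → IsZero N ∨ IsZero P

/-- A stratifying system of size `t`: a sequence `X₁, …, X_t` of indecomposable modules with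
`Hom(X_j, X_i) = 0` for `j > i` and `Ext¹(X_j, X_i) = 0` for `j ≥ i`. -/
def IsStratSys (R : Type) [Ring R] {t : ℕ} (X : Fin t → ModuleCat R) : Prop :=
  (∀ i, Indec R (X i)) ∧
  (∀ i j : Fin t, i < j → HomZero R (X j) (X i)) ∧
  (∀ i j : Fin t, i ≤ j → Ext1Zero R (X j) (X i))

/-- An almost split (Auslander–Reiten) sequence: a non-split short exact sequence
`0 → X₁ → X₂ → X₃ → 0` with `X₁`, `X₃` indecomposable, which is right almost split
(every non-split-epimorphism `Z → X₃` factors through `X₂`) and left almost split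
(every non-split-monomorphism `X₁ → Z` factors through `X₂`). -/
structure AlmostSplit {R : Type} [Ring R]
    (S : CategoryTheory.ShortComplex (ModuleCat R)) : Prop where
  shortExact : S.ShortExact
  nonsplit : IsEmpty S.Splitting
  indec₁ : Indec R S.X₁
  indec₃ : Indec R S.X₃
  right_almost_split : ∀ (Z : ModuleCat R) (h : Z ⟶ S.X₃),
    (¬ ∃ s : S.X₃ ⟶ Z, s ≫ h = 𝟙 S.X₃) → ∃ u : Z ⟶ S.X₂, u ≫ S.g = h
  left_almost_split : ∀ (Z : ModuleCat R) (h : S.X₁ ⟶ Z),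
    (¬ ∃ s : Z ⟶ S.X₁, h ≫ s = 𝟙 S.X₁) → ∃ u : S.X₂ ⟶ Z, S.f ≫ u = h

/-- Let `B` be a finite dimensional algebra and
`0 → L →(f',g')ᵗ→ X ⊕ Y →(f,g)→ M → 0` an almost split sequence in `mod B`. If `f'` is a
monomorphism (resp. epimorphism), then `g` is a monomorphism (resp. epimorphism); and if
`g'` is a monomorphism (resp. epimorphism), then `f` is a monomorphism (resp. epimorphism). -/
theorem almost_split_mono_epi (K B : Type) [Field K] [Ring B] [Algebra K B]
    [FiniteDimensional K B]
    (L X Y M : ModuleCat B)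
    (f' : L ⟶ X) (g' : L ⟶ Y) (f : X ⟶ M) (g : Y ⟶ M)
    (w : biprod.lift f' g' ≫ biprod.desc f g = 0)
    (h : AlmostSplit (CategoryTheory.ShortComplex.mk (biprod.lift f' g') (biprod.desc f g) w)) :
    (Mono f' → Mono g) ∧ (Epi f' → Epi g) ∧ (Mono g' → Mono f) ∧ (Epi g' → Epi f) := by
  haveI := h.shortExact.mono_f
  haveI := h.shortExact.epi_g
  have hex := h.shortExact.exact
  have hw : f' ≫ f + g' ≫ g = 0 := by simpa [biprod.lift_desc] using w
  refine ⟨?_, ?_, ?_, ?_⟩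
  · intro hf'
    apply Preadditive.mono_of_cancel_zero
    intro Z k hk
    have hu : biprod.lift (0 : Z ⟶ X) k ≫ biprod.desc f g = 0 := by
      simp [biprod.lift_desc, hk]
    set u := hex.lift (biprod.lift (0 : Z ⟶ X) k) hu with hudef
    have hu2 : u ≫ biprod.lift f' g' = biprod.lift (0 : Z ⟶ X) k :=
      hex.lift_f _ hu
    have h1 : u ≫ f' = 0 := by
      have := congrArg (· ≫ biprod.fst) hu2
      simpa using this
    have hu0 : u = 0 := by
      rw [← cancel_mono f', h1, zero_comp]
    have := congrArg (· ≫ biprod.snd) hu2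
    simp [hu0] at this
    exact this.symm
  · intro hf'
    apply Preadditive.epi_of_cancel_zero
    intro Z k hk
    have h1 : f ≫ k = 0 := by
      rw [← cancel_epi f']
      have : f' ≫ f = -(g' ≫ g) := by
        rw [eq_neg_iff_add_eq_zero]; exact hw
      rw [← Category.assoc, this]
      simp [hk]
    have h2 : biprod.desc f g ≫ k = 0 := by
      apply biprod.hom_ext' <;> simp [h1, hk]
    rw [← cancel_epi (biprod.desc f g), h2, comp_zero]
  · intro hg'
    apply Preadditive.mono_of_cancel_zero
    intro Z k hk
    have hu : biprod.lift k (0 : Z ⟶ Y) ≫ biprod.desc f g = 0 := by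
      simp [biprod.lift_desc, hk]
    set u := hex.lift (biprod.lift k (0 : Z ⟶ Y)) hu with hudef
    have hu2 : u ≫ biprod.lift f' g' = biprod.lift k (0 : Z ⟶ Y) :=
      hex.lift_f _ hu
    have h1 : u ≫ g' = 0 := by
      have := congrArg (· ≫ biprod.snd) hu2
      simpa using this
    have hu0 : u = 0 := by
      rw [← cancel_mono g', h1, zero_comp]
    have := congrArg (· ≫ biprod.fst) hu2
    simp [hu0] at this
    exact this.symm
  · intro hg'
    apply Preadditive.epi_of_cancel_zero
    intro Z k hk
    have h1 : g ≫ k = 0 := by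
      rw [← cancel_epi g']
      have : g' ≫ g = -(f' ≫ f) := by
        rw [eq_neg_iff_add_eq_zero, add_comm]; exact hw
      rw [← Category.assoc, this]
      simp [hk]
    have h2 : biprod.desc f g ≫ k = 0 := by
      apply biprod.hom_ext' <;> simp [h1, hk]
    rw [← cancel_epi (biprod.desc f g), h2, comp_zero]
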